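/- Let q be an odd prime power of characteristic p, (γ, δ, N) a gamma triple with N | q−1, and t ∈ F_q^×. Then F_q(γ, pδ, N | t) = F_q(γ, δ, N | t^p). -/

import Mathlib

open Polynomial

/-- `ζ_N = e^{2πi/N}`. -/
noncomputable def zetaN (N : ℕ) : ℂ := Complex.exp (2 * Real.pi * Complex.I / N)

/-- The gcd polynomial `D_δ(T)`. -/
noncomputable def Dpoly (d : ℕ) (γ δ : Fin (d + 2) → ℤ) (N : ℕ) : Polynomial ℂ :=
  EuclideanDomain.gcd
    (∏ i ∈ Finset.univ.filter (fun i => γ i < 0),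
      (X ^ (-(γ i)).toNat - C (zetaN N ^ (δ i))))
    (∏ i ∈ Finset.univ.filter (fun i => 0 < γ i),
      (X ^ (γ i).toNat - C (zetaN N ^ (-(δ i)))))

/-- `s_δ(m)`: the multiplicity of `e^{2πim/(q-1)}` as a root of `D_δ(T)`. -/
noncomputable def sMult (q d : ℕ) (γ δ : Fin (d + 2) → ℤ) (N : ℕ) (m : ℤ) : ℕ :=
  (Dpoly d γ δ N).rootMultiplicity
    (Complex.exp (2 * Real.pi * Complex.I * m / ((q : ℂ) - 1)))

/-- The Gauss sum `g(m) = Σ_{x∈F^×} ω^m(x) Θ(x)`. -/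
noncomputable def gSum (F : Type) [Field F] [Fintype F] [DecidableEq F]
    (ω : MulChar F ℂ) (Θ : AddChar F ℂ) (m : ℤ) : ℂ :=
  ∑ x : Fˣ, (ω ^ m) (x : F) * Θ (x : F)

/-- The finite hypergeometric sum `F_q(γ, δ, N | t)` of a gamma triple. -/
noncomputable def Fhyp (F : Type) [Field F] [Fintype F] [DecidableEq F]
    (ω : MulChar F ℂ) (Θ : AddChar F ℂ)
    (d : ℕ) (γ δ : Fin (d + 2) → ℤ) (N : ℕ) (t : F) : ℂ :=
  (1 / (1 - (Fintype.card F : ℂ))) *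
    ∑ m ∈ Finset.range (Fintype.card F - 1),
      (∏ i, gSum F ω Θ (-(γ i) * (m : ℤ) + δ i * (((Fintype.card F - 1) / N : ℕ) : ℤ)) /
            gSum F ω Θ (δ i * (((Fintype.card F - 1) / N : ℕ) : ℤ))) *
      (Fintype.card F : ℂ) ^
        ((sMult (Fintype.card F) d γ δ N (-(m : ℤ)) : ℤ) -
         (sMult (Fintype.card F) d γ δ N 0 : ℤ)) *
      (ω ((∏ i, (γ i : F) ^ (γ i)) * t)) ^ m



private lemma mc_zpow {F : Type} [Field F] [Fintype F] (ω : MulChar F ℂ) (n : ℤ) (x : F)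
    (hx : x ≠ 0) : (ω ^ n) x = ω x ^ n := by
  obtain ⟨k, rfl | rfl⟩ := n.eq_nat_or_neg
  · rcases Nat.eq_zero_or_pos k with rfl | hk
    · simpa using MulChar.one_apply (isUnit_iff_ne_zero.mpr hx)
    · rw [zpow_natCast, MulChar.pow_apply' ω hk.ne' x, zpow_natCast]
  · rw [zpow_neg, MulChar.inv_apply_eq_inv', zpow_neg, zpow_natCast]
    rcases Nat.eq_zero_or_pos k with rfl | hk
    · simpa using MulChar.one_apply (isUnit_iff_ne_zero.mpr hx)
    · rw [zpow_natCast, MulChar.pow_apply' ω hk.ne' x]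

private lemma mc_ne_zero {F : Type} [Field F] [Fintype F] (ω : MulChar F ℂ) {x : F}
    (hx : x ≠ 0) : ω x ≠ 0 := by
  intro h
  have h1 : ω x * ω x⁻¹ = 1 := by
    rw [← map_mul, mul_inv_cancel₀ hx, map_one]
  rw [h, zero_mul] at h1
  exact one_ne_zero h1.symm

-- zpow periodicity
private lemma zpow_eq_of_modeq {z : ℂ} (hz : z ≠ 0) {k : ℕ} (hk : z ^ k = 1) {a b : ℤ}
    (h : a ≡ b [ZMOD k]) : z ^ a = z ^ b := by
  obtain ⟨s, hs⟩ := Int.ModEq.dvd h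
  have : b = a + k * s := by linarith
  rw [this, zpow_add₀ hz, zpow_mul, zpow_natCast, hk, one_zpow, mul_one]

private lemma gSum_eq {F : Type} [Field F] [Fintype F] [DecidableEq F]
    (ω : MulChar F ℂ) (Θ : AddChar F ℂ) (m : ℤ) :
    gSum F ω Θ m = ∑ x : Fˣ, ω (x : F) ^ m * Θ (x : F) := by
  unfold gSum
  exact Finset.sum_congr rfl fun x _ => by rw [mc_zpow ω m _ x.ne_zero]

private lemma gSum_congr_mod {F : Type} [Field F] [Fintype F] [DecidableEq F]
    (ω : MulChar F ℂ) (Θ : AddChar F ℂ) {a b : ℤ}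
    (h : a ≡ b [ZMOD ((Fintype.card F - 1 : ℕ) : ℤ)]) : gSum F ω Θ a = gSum F ω Θ b := by
  rw [gSum_eq, gSum_eq]
  refine Finset.sum_congr rfl fun x _ => ?_
  congr 1
  exact zpow_eq_of_modeq (mc_ne_zero ω x.ne_zero)
    (by rw [← map_pow, FiniteField.pow_card_sub_one_eq_one _ x.ne_zero, map_one]) h



private lemma exists_frob_shift {F : Type} [Field F] [Fintype F] [DecidableEq F]
    (Θ : AddChar F ℂ) (hΘ : Θ ≠ 1) :
    ∃ c : F, c ≠ 0 ∧ ∀ x : F, Θ (x ^ ringChar F) = Θ (c * x) := by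
  haveI hchar := ringChar.charP F
  haveI hp : Fact (ringChar F).Prime := ⟨CharP.char_is_prime F (ringChar F)⟩
  set p := ringChar F with hpdef
  have hfrobinj : Function.Injective (fun x : F => x ^ p) := frobenius_inj F p
  have hfrobsurj : Function.Surjective (fun x : F => x ^ p) :=
    Finite.surjective_of_injective hfrobinj
  let ψ' : AddChar F ℂ := Θ.compAddMonoidHom ((frobenius F p).toAddMonoidHom)
  have hinj : Function.Injective (fun a : F => AddChar.mulShift Θ a) :=
    AddChar.to_mulShift_inj_of_isPrimitive (AddChar.IsPrimitive.of_ne_one hΘ)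
  have hsurj : Function.Surjective (fun a : F => AddChar.mulShift Θ a) := by
    have hcard : Fintype.card F = Fintype.card (AddChar F ℂ) := (AddChar.card_eq).symm
    exact ((Fintype.bijective_iff_injective_and_card _).mpr ⟨hinj, hcard⟩).2
  obtain ⟨c, hc⟩ := hsurj ψ'
  have hcx : ∀ x : F, Θ (x ^ p) = Θ (c * x) := by
    intro x
    have := congrArg (fun ψ : AddChar F ℂ => ψ x) hc
    simpa [ψ', frobenius_def] using this.symm
  refine ⟨c, ?_, hcx⟩
  rintro rfl
  apply hΘ
  ext y
  obtain ⟨x, rfl⟩ := hfrobsurj y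
  simpa using hcx x


private lemma gSum_frob {F : Type} [Field F] [Fintype F] [DecidableEq F]
    (ω : MulChar F ℂ) (Θ : AddChar F ℂ) {c : F} (hc0 : c ≠ 0)
    (hc : ∀ x : F, Θ (x ^ ringChar F) = Θ (c * x)) (n : ℤ) :
    gSum F ω Θ ((ringChar F : ℤ) * n) = ω c ^ ((ringChar F : ℤ) * n) * gSum F ω Θ n := by
  haveI hchar := ringChar.charP F
  haveI hp : Fact (ringChar F).Prime := ⟨CharP.char_is_prime F (ringChar F)⟩
  set p := ringChar F with hpdef
  -- step 1 : gSum n = ∑ x, ω x ^ (p * n) * Θ (c * x)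
  have hinjU : Function.Injective (fun x : Fˣ => x ^ p) := by
    intro a b hab
    exact Units.ext (frobenius_inj F p (by
      simpa [frobenius_def, Units.val_pow_eq_pow_val] using congrArg (Units.val) hab))
  have hbij : Function.Bijective (fun x : Fˣ => x ^ p) :=
    Finite.injective_iff_bijective.mp hinjU
  have step1 : gSum F ω Θ n = ∑ x : Fˣ, ω (x : F) ^ ((p : ℤ) * n) * Θ (c * x) := by
    rw [gSum_eq]
    refine (Fintype.sum_bijective _ hbij _ _ fun x => ?_).symm
    have h1 : ω ((x ^ p : Fˣ) : F) ^ n = ω (x : F) ^ ((p : ℤ) * n) := by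
      rw [Units.val_pow_eq_pow_val, map_pow, ← zpow_natCast, ← zpow_mul]
    have h2 : Θ (((x ^ p : Fˣ) : F)) = Θ (c * x) := by
      rw [Units.val_pow_eq_pow_val, hc]
    rw [h1, h2]
  -- step 2 : reindex gSum (p * n) by x ↦ c * x
  let cu : Fˣ := Units.mk0 c hc0
  have step2 : gSum F ω Θ ((p : ℤ) * n) =
      ∑ x : Fˣ, ω c ^ ((p : ℤ) * n) * (ω (x : F) ^ ((p : ℤ) * n) * Θ (c * x)) := by
    rw [gSum_eq]
    refine (Fintype.sum_bijective (fun x : Fˣ => cu * x) (Group.mulLeft_bijective cu) _ _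
      fun x => ?_).symm
    have h3 : ((cu * x : Fˣ) : F) = c * x := rfl
    rw [h3, map_mul ω c (x:F), mul_zpow]
    ring
  rw [step2, ← Finset.mul_sum, ← step1]



private lemma rm_X_pow_sub_C {a : ℕ} (ha : a ≠ 0) {c : ℂ} (hc : c ≠ 0) (x : ℂ) :
    rootMultiplicity x ((X : ℂ[X]) ^ a - C c) = if x ^ a = c then 1 else 0 := by
  by_cases h : x ^ a = c
  · rw [if_pos h]
    have hne : ((X : ℂ[X]) ^ a - C c) ≠ 0 := X_pow_sub_C_ne_zero (Nat.pos_of_ne_zero ha) c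
    have hroot : IsRoot ((X : ℂ[X]) ^ a - C c) x := by simp [IsRoot, h]
    have hsf : Squarefree ((X : ℂ[X]) ^ a - C c) :=
      (Polynomial.separable_X_pow_sub_C c (by exact_mod_cast ha) hc).squarefree
    refine le_antisymm ?_ ?_
    · by_contra hgt
      push_neg at hgt
      have hdvd : (X - C x) * (X - C x) ∣ ((X : ℂ[X]) ^ a - C c) := by
        calc (X - C x) * (X - C x) = (X - C x) ^ 2 := (sq _).symm
          _ ∣ (X - C x) ^ rootMultiplicity x ((X : ℂ[X]) ^ a - C c) := pow_dvd_pow _ hgt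
          _ ∣ _ := pow_rootMultiplicity_dvd _ _
      exact (Polynomial.not_isUnit_X_sub_C x) (hsf _ hdvd)
    · exact (le_rootMultiplicity_iff hne).mpr (by simpa using dvd_iff_isRoot.mpr hroot)
  · rw [if_neg h, rootMultiplicity_eq_zero]
    simp [IsRoot, sub_eq_zero, h]

private lemma rm_prod {ι : Type*} (s : Finset ι) (f : ι → Polynomial ℂ)
    (hf : ∀ i ∈ s, f i ≠ 0) (x : ℂ) :
    rootMultiplicity x (∏ i ∈ s, f i) = ∑ i ∈ s, rootMultiplicity x (f i) := by
  induction s using Finset.cons_induction with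
  | empty => simpa using rootMultiplicity_eq_zero (by simp [IsRoot])
  | cons a s ha ih =>
    rw [Finset.prod_cons, Finset.sum_cons,
      rootMultiplicity_mul (mul_ne_zero (hf a (Finset.mem_cons_self a s))
        (Finset.prod_ne_zero_iff.mpr fun i hi => hf i (Finset.mem_cons_of_mem hi))),
      ih fun i hi => hf i (Finset.mem_cons_of_mem hi)]

private lemma rm_gcd (P Q : Polynomial ℂ) (hP : P ≠ 0) (hQ : Q ≠ 0) (x : ℂ) :
    rootMultiplicity x (EuclideanDomain.gcd P Q)
      = min (rootMultiplicity x P) (rootMultiplicity x Q) := by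
  have hg : EuclideanDomain.gcd P Q ≠ 0 := by
    rw [Ne, EuclideanDomain.gcd_eq_zero_iff]
    rintro ⟨rfl, -⟩; exact hP rfl
  refine le_antisymm (le_min ?_ ?_) ?_
  · exact (le_rootMultiplicity_iff hP).mpr
      ((pow_rootMultiplicity_dvd _ _).trans (EuclideanDomain.gcd_dvd_left P Q))
  · exact (le_rootMultiplicity_iff hQ).mpr
      ((pow_rootMultiplicity_dvd _ _).trans (EuclideanDomain.gcd_dvd_right P Q))
  · refine (le_rootMultiplicity_iff hg).mpr (EuclideanDomain.dvd_gcd ?_ ?_)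
    · exact (pow_dvd_pow _ (min_le_left _ _)).trans (pow_rootMultiplicity_dvd _ _)
    · exact (pow_dvd_pow _ (min_le_right _ _)).trans (pow_rootMultiplicity_dvd _ _)

private lemma pow_coprime_inj {Q p : ℕ} (hQ : 0 < Q) (hcop : Nat.Coprime p Q)
    {y z : ℂ} (hy : y ^ Q = 1) (hz : z ^ Q = 1) (h : y ^ p = z ^ p) : y = z := by
  have hy0 : y ≠ 0 := fun h0 => by simp [h0, zero_pow hQ.ne'] at hy
  have hz0 : z ≠ 0 := fun h0 => by simp [h0, zero_pow hQ.ne'] at hz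
  have hb : (p : ℤ) * Nat.gcdA p Q + (Q : ℤ) * Nat.gcdB p Q = 1 := by
    have := Nat.gcd_eq_gcd_ab p Q
    rw [hcop] at this
    exact_mod_cast this.symm
  have hyz : ∀ w : ℂ, w ≠ 0 → w ^ Q = 1 → w = (w ^ p : ℂ) ^ Nat.gcdA p Q := by
    intro w hw0 hwQ
    conv_lhs => rw [← zpow_one w, ← hb]
    rw [zpow_add₀ hw0, zpow_mul, zpow_mul, zpow_natCast, zpow_natCast, hwQ, one_zpow, mul_one]
  rw [hyz y hy0 hy, hyz z hz0 hz, h]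



private lemma zetaN_pow {N Q : ℕ} (hN : 0 < N) (hNdvd : N ∣ Q) : zetaN N ^ Q = 1 := by
  obtain ⟨k, rfl⟩ := hNdvd
  unfold zetaN
  rw [← Complex.exp_nat_mul]
  have hNc : (N : ℂ) ≠ 0 := Nat.cast_ne_zero.mpr hN.ne'
  have : ((N * k : ℕ) : ℂ) * (2 * Real.pi * Complex.I / N) = k * (2 * Real.pi * Complex.I) := by
    push_cast
    field_simp
  rw [this]
  have := Complex.exp_int_mul_two_pi_mul_I (k : ℤ)
  simpa [mul_comm] using this

private lemma rm_Dpoly_frob (d : ℕ) (γ δ : Fin (d + 2) → ℤ) {N : ℕ} (hN : 0 < N)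
    {Q : ℕ} (hQ : 0 < Q) (hNdvd : N ∣ Q) {p : ℕ} (hcop : Nat.Coprime p Q)
    {y : ℂ} (hy : y ^ Q = 1) :
    rootMultiplicity (y ^ p) (Dpoly d γ (fun i => (p : ℤ) * δ i) N)
      = rootMultiplicity y (Dpoly d γ δ N) := by
  have hζ : zetaN N ≠ 0 := Complex.exp_ne_zero _
  have hζQ : zetaN N ^ Q = 1 := zetaN_pow hN hNdvd
  have hy0 : y ≠ 0 := fun h0 => by simp [h0, zero_pow hQ.ne'] at hy
  have hzQ : ∀ b : ℤ, (zetaN N ^ b) ^ Q = 1 := by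
    intro b
    rw [← zpow_natCast (zetaN N ^ b), ← zpow_mul, mul_comm, zpow_mul, zpow_natCast, hζQ, one_zpow]
  have key : ∀ (b : ℤ) (a : ℕ), a ≠ 0 →
      ((y ^ p) ^ a = zetaN N ^ ((p : ℤ) * b) ↔ y ^ a = zetaN N ^ b) := by
    intro b a ha
    have h1 : (y ^ p) ^ a = (y ^ a) ^ p := by rw [← pow_mul, mul_comm, pow_mul]
    have h2 : zetaN N ^ ((p : ℤ) * b) = (zetaN N ^ b) ^ p := by
      rw [mul_comm, zpow_mul, zpow_natCast]
    rw [h1, h2]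
    constructor
    · intro h
      refine pow_coprime_inj hQ hcop ?_ (hzQ b) h
      rw [← pow_mul, mul_comm, pow_mul, hy, one_pow]
    · intro h; rw [h]
  have hfac1 : ∀ i : Fin (d + 2), γ i < 0 → (0:ℕ) ≠ (-(γ i)).toNat := by
    intro i hi; omega
  have hfac2 : ∀ i : Fin (d + 2), 0 < γ i → (0:ℕ) ≠ (γ i).toNat := by
    intro i hi; omega
  unfold Dpoly
  have hne1 : ∀ (δ' : Fin (d+2) → ℤ) i, i ∈ Finset.univ.filter (fun i => γ i < 0) →
      (X : ℂ[X]) ^ (-(γ i)).toNat - C (zetaN N ^ (δ' i)) ≠ 0 := fun δ' i hi =>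
    X_pow_sub_C_ne_zero (Nat.pos_of_ne_zero (Ne.symm (hfac1 i (Finset.mem_filter.mp hi).2))) _
  have hne2 : ∀ (δ' : Fin (d+2) → ℤ) i, i ∈ Finset.univ.filter (fun i => 0 < γ i) →
      (X : ℂ[X]) ^ (γ i).toNat - C (zetaN N ^ (-(δ' i))) ≠ 0 := fun δ' i hi =>
    X_pow_sub_C_ne_zero (Nat.pos_of_ne_zero (Ne.symm (hfac2 i (Finset.mem_filter.mp hi).2))) _
  rw [rm_gcd _ _ (Finset.prod_ne_zero_iff.mpr (hne1 _)) (Finset.prod_ne_zero_iff.mpr (hne2 _)),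
      rm_gcd _ _ (Finset.prod_ne_zero_iff.mpr (hne1 _)) (Finset.prod_ne_zero_iff.mpr (hne2 _)),
      rm_prod _ _ (hne1 _), rm_prod _ _ (hne2 _), rm_prod _ _ (hne1 _), rm_prod _ _ (hne2 _)]
  congr 1
  · refine Finset.sum_congr rfl fun i hi => ?_
    have ha := Ne.symm (hfac1 i (Finset.mem_filter.mp hi).2)
    rw [rm_X_pow_sub_C ha (zpow_ne_zero _ hζ) _, rm_X_pow_sub_C ha (zpow_ne_zero _ hζ) _]
    exact if_congr (key (δ i) _ ha) rfl rfl
  · refine Finset.sum_congr rfl fun i hi => ?_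
    have ha := Ne.symm (hfac2 i (Finset.mem_filter.mp hi).2)
    rw [rm_X_pow_sub_C ha (zpow_ne_zero _ hζ) _, rm_X_pow_sub_C ha (zpow_ne_zero _ hζ) _]
    have : -((p : ℤ) * δ i) = (p : ℤ) * (-(δ i)) := by ring
    rw [this]
    exact if_congr (key (-(δ i)) _ ha) rfl rfl



private lemma exp_point_congr {q : ℕ} (hq : 1 < q) {a b : ℤ} (h : a ≡ b [ZMOD ((q-1:ℕ) : ℤ)]) :
    Complex.exp (2 * Real.pi * Complex.I * a / ((q : ℂ) - 1))
      = Complex.exp (2 * Real.pi * Complex.I * b / ((q : ℂ) - 1)) := by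
  obtain ⟨s, hs⟩ := Int.ModEq.dvd h
  have hb : b = a + ((q - 1 : ℕ) : ℤ) * s := by linarith
  have hq1 : ((q : ℂ) - 1) ≠ 0 := by
    intro h0
    have : (q : ℂ) = 1 := by linear_combination h0
    have : (q : ℕ) = 1 := by exact_mod_cast this
    omega
  have hcast : (((q - 1 : ℕ) : ℤ) : ℂ) = (q : ℂ) - 1 := by
    push_cast [Nat.cast_sub hq.le]
    ring
  rw [hb]
  push_cast
  rw [mul_add, add_div, Complex.exp_add]
  have h5 : 2 * (Real.pi:ℂ) * Complex.I * (((q - 1 : ℕ):ℂ) * (s:ℂ)) / ((q : ℂ) - 1)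
      = (s:ℂ) * (2 * Real.pi * Complex.I) := by
    rw [Nat.cast_sub hq.le]
    field_simp
    ring
  rw [h5, Complex.exp_int_mul_two_pi_mul_I, mul_one]

private lemma exp_pow_p {q p : ℕ} (hq : 1 < q) (m : ℤ) :
    Complex.exp (2 * Real.pi * Complex.I * ((p:ℂ) * (m:ℂ)) / ((q : ℂ) - 1))
      = Complex.exp (2 * Real.pi * Complex.I * m / ((q : ℂ) - 1)) ^ p := by
  rw [← Complex.exp_nat_mul]
  congr 1
  ring

private lemma exp_point_pow_Q {q : ℕ} (hq : 1 < q) (m : ℤ) :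
    Complex.exp (2 * Real.pi * Complex.I * m / ((q : ℂ) - 1)) ^ (q - 1 : ℕ) = 1 := by
  rw [← Complex.exp_nat_mul]
  have hq1 : ((q : ℂ) - 1) ≠ 0 := by
    intro h0
    have : (q : ℂ) = 1 := by linear_combination h0
    have : (q : ℕ) = 1 := by exact_mod_cast this
    omega
  have : ((q - 1 : ℕ) : ℂ) * (2 * Real.pi * Complex.I * m / ((q : ℂ) - 1))
      = m * (2 * Real.pi * Complex.I) := by
    rw [Nat.cast_sub hq.le]
    push_cast
    field_simp
  rw [this, Complex.exp_int_mul_two_pi_mul_I]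

private lemma sMult_frob {q : ℕ} (hq : 1 < q) (d : ℕ) (γ δ : Fin (d + 2) → ℤ) {N : ℕ}
    (hN : 0 < N) (hNdvd : N ∣ q - 1) {p : ℕ} (hcop : Nat.Coprime p (q - 1))
    {m m' : ℤ} (hmm : m' ≡ (p:ℤ) * m [ZMOD ((q-1:ℕ) : ℤ)]) :
    sMult q d γ (fun i => (p : ℤ) * δ i) N m' = sMult q d γ δ N m := by
  unfold sMult
  rw [exp_point_congr hq hmm]
  push_cast
  rw [exp_pow_p hq m]
  exact rm_Dpoly_frob d γ δ hN (by omega) hNdvd hcop (exp_point_pow_Q hq m)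



private lemma zpow_pow_comm {G : Type*} [GroupWithZero G] (x : G) (b : ℤ) {p : ℕ}
    (hp : p ≠ 0) : (x ^ b) ^ p = (x ^ p) ^ b := by
  by_cases hx : x = 0
  · subst hx
    by_cases hb : b = 0
    · simp [hb]
    · rw [zero_zpow b hb, zero_pow hp, zero_zpow b hb]
  · rw [← zpow_natCast (x ^ b), ← zpow_mul, mul_comm, zpow_mul, zpow_natCast]

private lemma omega_pow_part {F : Type} [Field F] [Fintype F] [DecidableEq F]
    (ω : MulChar F ℂ) {p : ℕ} (hp : 0 < p) (hcop : Nat.Coprime p (Fintype.card F - 1))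
    {a : F} (ha : a ^ p = a) (t : F) (ht : t ≠ 0) (m : ℕ) (hm : m < Fintype.card F - 1) :
    ω (a * t) ^ ((p * m) % (Fintype.card F - 1)) = ω (a * t ^ p) ^ m := by
  set n := Fintype.card F - 1 with hn
  have hn0 : 0 < n := by omega
  by_cases ha0 : a = 0
  · subst ha0
    rw [zero_mul, zero_mul, MulChar.map_nonunit ω (by simp)]
    by_cases hm0 : m = 0
    · subst hm0
      simp
    · have h1 : (p * m) % n ≠ 0 := by
        intro h
        have hdvd : n ∣ p * m := Nat.dvd_of_mod_eq_zero h
        have : n ∣ m := (Nat.Coprime.dvd_of_dvd_mul_left hcop.symm) hdvd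
        have := Nat.le_of_dvd (Nat.pos_of_ne_zero hm0) this
        omega
      rw [zero_pow h1, zero_pow hm0]
  · have hat : a * t ≠ 0 := mul_ne_zero ha0 ht
    have hz : ω (a * t) ^ n = 1 := by
      rw [← map_pow, hn, FiniteField.pow_card_sub_one_eq_one _ hat, map_one]
    rw [← pow_eq_pow_mod (p * m) hz, pow_mul, ← map_pow, mul_pow, ha]



private lemma prod_zpow_eq {ι : Type*} (s : Finset ι) {z : ℂ} (hz : z ≠ 0) (k : ι → ℤ) :
    ∏ i ∈ s, z ^ k i = z ^ (∑ i ∈ s, k i) := by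
  induction s using Finset.cons_induction with
  | empty => simp
  | cons a s ha ih => rw [Finset.prod_cons, Finset.sum_cons, ih, zpow_add₀ hz]

private lemma mod_inv_cancel {n u v : ℕ} (hn : 1 < n) (huv : u * v % n = 1) (a : ℕ)
    (ha : a < n) : (u * ((v * a) % n)) % n = a := by
  have e0 : u * v ≡ 1 [MOD n] := by
    unfold Nat.ModEq
    rw [huv, Nat.mod_eq_of_lt hn]
  have e1 : u * ((v * a) % n) ≡ u * v * a [MOD n] := by
    calc u * ((v * a) % n) ≡ u * (v * a) [MOD n] := Nat.ModEq.mul_left u (Nat.mod_modEq _ n)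
      _ = u * v * a := by ring
  have e2 : u * v * a ≡ 1 * a [MOD n] := Nat.ModEq.mul_right a e0
  have e3 := e1.trans e2
  rw [one_mul] at e3
  calc (u * ((v * a) % n)) % n = a % n := e3
    _ = a := Nat.mod_eq_of_lt ha


set_option maxHeartbeats 1000000 in
/-- Frobenius relation: `F_q(γ, pδ, N | t) = F_q(γ, δ, N | t^p)` where `p` is the
characteristic of `F_q`. -/
theorem Fhyp_frobenius (F : Type) [Field F] [Fintype F] [DecidableEq F]
    (hodd : Odd (Fintype.card F))
    (ω : MulChar F ℂ) (hω : ∀ χ : MulChar F ℂ, ∃ m : ℤ, χ = ω ^ m)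
    (Θ : AddChar F ℂ) (hΘ : Θ ≠ 1)
    (d : ℕ) (γ δ : Fin (d + 2) → ℤ)
    (hsum : ∑ i, γ i = 0) (hgcd : Finset.univ.gcd γ = 1)
    (N : ℕ) (hN : 0 < N) (hNdvd : N ∣ Fintype.card F - 1)
    (t : F) (ht : t ≠ 0) :
    Fhyp F ω Θ d γ (fun i => (ringChar F : ℤ) * δ i) N t =
      Fhyp F ω Θ d γ δ N (t ^ ringChar F) := by
  classical
  haveI hchar := ringChar.charP F
  haveI hpfact : Fact (ringChar F).Prime := ⟨CharP.char_is_prime F (ringChar F)⟩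
  obtain ⟨c, hc0, hc⟩ := exists_frob_shift Θ hΘ
  set p := ringChar F with hpdef
  set q := Fintype.card F with hqdef
  set n := q - 1 with hndef
  set K := ((q - 1) / N : ℕ) with hKdef
  have hq1 : 1 < q := Fintype.one_lt_card
  have hpq : p ∣ q := by
    obtain ⟨u, hprime, hcard⟩ := FiniteField.card F p
    rw [hqdef, hcard]
    exact dvd_pow_self p u.2.ne'
  have hq3 : 3 ≤ q := by
    rcases hodd with ⟨k, hk⟩
    rcases hpq with ⟨l, hl⟩
    omega
  have hn1 : 1 < n := by omega
  have hn0 : 0 < n := by omega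
  have hpn : ¬ p ∣ n := by
    intro h
    have h1 : p ∣ q - n := Nat.dvd_sub hpq h
    have h2 : q - n = 1 := by omega
    rw [h2] at h1
    exact absurd (Nat.eq_one_of_dvd_one h1) hpfact.out.ne_one
  have hcop : Nat.Coprime p n := (Nat.Prime.coprime_iff_not_dvd hpfact.out).mpr hpn
  have hp0 : 0 < p := hpfact.out.pos
  obtain ⟨p', -, hp'⟩ := Nat.exists_mul_mod_eq_one_of_coprime hcop hn1
  have hωc : ω c ≠ 0 := mc_ne_zero ω hc0
  have hA : (∏ i, (γ i : F) ^ (γ i)) ^ p = ∏ i, (γ i : F) ^ (γ i) := by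
    rw [← Finset.prod_pow]
    refine Finset.prod_congr rfl fun i _ => ?_
    rw [zpow_pow_comm _ _ hp0.ne']
    congr 1
    have h1 : frobenius F p ((γ i : ℤ) : F) = ((γ i : ℤ) : F) := map_intCast _ _
    rw [frobenius_def] at h1
    exact h1
  -- the key termwise identity
  have key : ∀ a m : ℕ, m < n → a = (p * m) % n →
      (∏ i, gSum F ω Θ (-(γ i) * (a : ℤ) + (p : ℤ) * δ i * (K : ℤ)) /
            gSum F ω Θ ((p : ℤ) * δ i * (K : ℤ))) *
        (q : ℂ) ^ ((sMult q d γ (fun i => (p : ℤ) * δ i) N (-(a : ℤ)) : ℤ) -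
          (sMult q d γ (fun i => (p : ℤ) * δ i) N 0 : ℤ)) *
        (ω ((∏ i, (γ i : F) ^ (γ i)) * t)) ^ a =
      (∏ i, gSum F ω Θ (-(γ i) * (m : ℤ) + δ i * (K : ℤ)) /
            gSum F ω Θ (δ i * (K : ℤ))) *
        (q : ℂ) ^ ((sMult q d γ δ N (-(m : ℤ)) : ℤ) - (sMult q d γ δ N 0 : ℤ)) *
        (ω ((∏ i, (γ i : F) ^ (γ i)) * t ^ p)) ^ m := by
    intro a m hm haeq
    have hamodZ : (a : ℤ) ≡ (p : ℤ) * (m : ℤ) [ZMOD ((n : ℕ) : ℤ)] := by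
      show (a : ℤ) % (n : ℤ) = ((p : ℤ) * (m : ℤ)) % (n : ℤ)
      rw [haeq]
      push_cast [Int.natCast_mod]
      exact Int.emod_emod_of_dvd _ dvd_rfl
    -- component 1 : the product of Gauss sum ratios
    have hterm : ∀ i : Fin (d + 2),
        gSum F ω Θ (-(γ i) * (a : ℤ) + (p : ℤ) * δ i * (K : ℤ)) /
          gSum F ω Θ ((p : ℤ) * δ i * (K : ℤ)) =
        ω c ^ (-(p : ℤ) * γ i * m) *
          (gSum F ω Θ (-(γ i) * (m : ℤ) + δ i * (K : ℤ)) / gSum F ω Θ (δ i * (K : ℤ))) := by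
      intro i
      have e : (-(γ i) * (a : ℤ) + (p : ℤ) * δ i * (K : ℤ)) ≡
          (p : ℤ) * (-(γ i) * (m : ℤ) + δ i * (K : ℤ)) [ZMOD ((n : ℕ) : ℤ)] := by
        have h1 := hamodZ.mul_left (-(γ i))
        have h2 := h1.add_right ((p : ℤ) * δ i * (K : ℤ))
        have h3 : -(γ i) * ((p : ℤ) * (m : ℤ)) + (p : ℤ) * δ i * (K : ℤ)
            = (p : ℤ) * (-(γ i) * (m : ℤ) + δ i * (K : ℤ)) := by ring
        rw [h3] at h2
        exact h2
      have eden : ((p : ℤ) * δ i * (K : ℤ)) = (p : ℤ) * (δ i * (K : ℤ)) := by ring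
      rw [gSum_congr_mod ω Θ e, gSum_frob ω Θ hc0 hc, eden, gSum_frob ω Θ hc0 hc,
        mul_div_mul_comm, ← zpow_sub₀ hωc]
      congr 2
      ring
    have hprod : (∏ i, gSum F ω Θ (-(γ i) * (a : ℤ) + (p : ℤ) * δ i * (K : ℤ)) /
            gSum F ω Θ ((p : ℤ) * δ i * (K : ℤ))) =
        ∏ i, gSum F ω Θ (-(γ i) * (m : ℤ) + δ i * (K : ℤ)) / gSum F ω Θ (δ i * (K : ℤ)) := by
      rw [Finset.prod_congr rfl fun i _ => hterm i, Finset.prod_mul_distrib,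
        prod_zpow_eq _ hωc]
      have hzero : (∑ i, -(p : ℤ) * γ i * (m : ℤ)) = 0 := by
        have : (∑ i, -(p : ℤ) * γ i * (m : ℤ)) = (∑ i, γ i) * (-(p : ℤ) * (m : ℤ)) := by
          rw [Finset.sum_mul]
          exact Finset.sum_congr rfl fun i _ => by ring
        rw [this, hsum, zero_mul]
      rw [hzero, zpow_zero, one_mul]
    -- component 2 : the sMult exponents
    have hs1 : sMult q d γ (fun i => (p : ℤ) * δ i) N (-(a : ℤ)) = sMult q d γ δ N (-(m : ℤ)) := by
      refine sMult_frob hq1 d γ δ hN hNdvd hcop ?_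
      have := hamodZ.neg
      rw [← mul_neg] at this
      exact this
    have hs0 : sMult q d γ (fun i => (p : ℤ) * δ i) N 0 = sMult q d γ δ N 0 := by
      refine sMult_frob hq1 d γ δ hN hNdvd hcop ?_
      simp [Int.ModEq.refl]
    -- component 3 : the character power
    have hω3 : (ω ((∏ i, (γ i : F) ^ (γ i)) * t)) ^ a
        = (ω ((∏ i, (γ i : F) ^ (γ i)) * t ^ p)) ^ m := by
      rw [haeq]
      exact omega_pow_part ω hp0 hcop hA t ht m hm
    rw [hprod, hs1, hs0, hω3]
  unfold Fhyp
  congr 1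
  refine Finset.sum_nbij' (fun a => (p' * a) % n) (fun m => (p * m) % n) ?_ ?_ ?_ ?_ ?_
  · intro a ha
    exact Finset.mem_range.mpr (Nat.mod_lt _ hn0)
  · intro m hm
    exact Finset.mem_range.mpr (Nat.mod_lt _ hn0)
  · intro a ha
    exact mod_inv_cancel hn1 hp' a (Finset.mem_range.mp ha)
  · intro m hm
    exact mod_inv_cancel hn1 (by rwa [mul_comm] at hp') m (Finset.mem_range.mp hm)
  · intro a ha
    exact key a ((p' * a) % n) (Nat.mod_lt _ hn0)
      (mod_inv_cancel hn1 hp' a (Finset.mem_range.mp ha)).symm
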